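/- For a positional marked pattern τ = τ_1...τ_k with underlined position ℓ, a permutation σ ∈ S_n satisfies pmp_τ(σ) = n-k+1 if and only if: (1) the set {σ_1,...,σ_{ℓ-1}, σ_{n-k+ℓ+1},...,σ_n} equals {1,...,τ_ℓ-1} ∪ {n-k+τ_ℓ+1,...,n}, and (2) red(σ_1...σ_{ℓ-1}σ_{n-k+ℓ+1}...σ_n) = red(τ_1...τ_{ℓ-1}τ_{ℓ+1}...τ_k). -/

import Mathlib

/-- `σ` has a `τ`-match (with marked position `ℓ`) at position `i`. -/
def HasPMPMatch {k n : ℕ} (τ : Equiv.Perm (Fin k)) (ℓ : Fin k)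
    (σ : Equiv.Perm (Fin n)) (i : Fin n) : Prop :=
  ∃ f : Fin k → Fin n, StrictMono f ∧ f ℓ = i ∧
    ∀ a b : Fin k, σ (f a) < σ (f b) ↔ τ a < τ b

/-- The number of positions at which `σ` has a `τ`-match. -/
noncomputable def pmpCount {k n : ℕ} (τ : Equiv.Perm (Fin k)) (ℓ : Fin k)
    (σ : Equiv.Perm (Fin n)) : ℕ :=
  Nat.card {i : Fin n // HasPMPMatch τ ℓ σ i}

/-- The position in `σ ∈ S_n` corresponding to the index `a ≠ ℓ` of the pattern:
indices before the mark go to the first positions, indices after the mark go to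
the last positions. -/
def bpos {n k : ℕ} (hkn : k ≤ n) (ℓ a : Fin k) : Fin n :=
  if (a : ℕ) < (ℓ : ℕ) then ⟨a, lt_of_lt_of_le a.isLt hkn⟩
  else ⟨n - k + (a : ℕ), by have := a.isLt; omega⟩

open Finset


lemma rank_inj {α : Type*} [LinearOrder α] {s : Finset α} {x y : α}
    (hx : x ∈ s) (hy : y ∈ s)
    (h : (s.filter (· < x)).card = (s.filter (· < y)).card) : x = y := by
  rcases lt_trichotomy x y with hlt | he | hgt
  · exfalso
    have hss : s.filter (· < x) ⊂ s.filter (· < y) := by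
      refine ⟨Finset.monotone_filter_right s ?_, fun hsub => ?_⟩
      · intro a _ ha; exact lt_trans ha hlt
      · have : x ∈ s.filter (· < x) := hsub (Finset.mem_filter.2 ⟨hx, hlt⟩)
        simp at this
    exact absurd h (Nat.ne_of_lt (Finset.card_lt_card hss))
  · exact he
  · exfalso
    have hss : s.filter (· < y) ⊂ s.filter (· < x) := by
      refine ⟨Finset.monotone_filter_right s ?_, fun hsub => ?_⟩
      · intro a _ ha; exact lt_trans ha hgt
      · have : y ∈ s.filter (· < y) := hsub (Finset.mem_filter.2 ⟨hy, hgt⟩)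
        simp at this
    exact absurd h.symm (Nat.ne_of_lt (Finset.card_lt_card hss))

lemma rank_transfer {α β : Type*} [DecidableEq β] [LinearOrder β] {s : Finset α} {g : α → β}
    (hinj : Set.InjOn g s) (y : β) :
    ((s.image g).filter (· < y)).card = (s.filter (fun c => g c < y)).card := by
  rw [Finset.filter_image]
  exact Finset.card_image_of_injOn (hinj.mono (fun a ha => (Finset.mem_filter.1 ha).1))

lemma mono_image_unique {α β : Type*} [DecidableEq β] [LinearOrder β]
    {s : Finset α} {g h : α → β}
    (hgi : Set.InjOn g s) (hhi : Set.InjOn h s)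
    (himg : s.image g = s.image h)
    (hord : ∀ a ∈ s, ∀ b ∈ s, (g a < g b ↔ h a < h b)) :
    ∀ x ∈ s, g x = h x := by
  intro x hx
  refine rank_inj (s := s.image g) (Finset.mem_image_of_mem g hx)
    (by rw [himg]; exact Finset.mem_image_of_mem h hx) ?_
  rw [rank_transfer hgi (g x), himg, rank_transfer hhi (h x)]
  congr 1
  apply Finset.filter_congr
  intro a ha
  exact hord a ha x hx

lemma strictMono_gap {k n : ℕ} {f : Fin k → Fin n} (hf : StrictMono f) :
    ∀ a b : Fin k, (a:ℕ) ≤ (b:ℕ) → (f a : ℕ) + ((b:ℕ) - (a:ℕ)) ≤ (f b : ℕ) := by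
  have key : ∀ d : ℕ, ∀ a b : Fin k, (b:ℕ) = (a:ℕ) + d → (f a : ℕ) + d ≤ (f b : ℕ) := by
    intro d
    induction d with
    | zero => intro a b hb; have : a = b := Fin.ext (by omega); simp [this]
    | succ d ih =>
      intro a b hb
      have hb' : (a:ℕ) + d < k := by have := b.isLt; omega
      have h1 := ih a ⟨(a:ℕ) + d, hb'⟩ rfl
      have h2 : f ⟨(a:ℕ) + d, hb'⟩ < f b := hf (by simp [Fin.lt_def]; omega)
      rw [Fin.lt_def] at h2; omega
  intro a b hab
  have := key ((b:ℕ) - (a:ℕ)) a b (by omega)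
  omega

lemma strictMono_le_apply {k n : ℕ} {f : Fin k → Fin n} (hf : StrictMono f) (a : Fin k) :
    (a:ℕ) ≤ (f a : ℕ) := by
  have h0 : (0:ℕ) < k := a.pos
  have h1 := strictMono_gap hf ⟨0, h0⟩ a (by simp)
  have h2 : ((⟨0, h0⟩ : Fin k) : ℕ) = 0 := rfl
  omega

lemma strictMono_apply_le {k n : ℕ} {f : Fin k → Fin n} (hf : StrictMono f) (a : Fin k) :
    (f a : ℕ) ≤ n - k + (a:ℕ) := by
  have h0 : (0:ℕ) < k := a.pos
  have hlast : k - 1 < k := by omega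
  have h1 := strictMono_gap hf a ⟨k-1, hlast⟩ (by simp; omega)
  have h2 : ((⟨k-1, hlast⟩ : Fin k) : ℕ) = k - 1 := rfl
  have := (f ⟨k-1, hlast⟩).isLt
  have := a.isLt
  have := (f a).isLt
  omega

lemma card_filter_lt_fin {m : ℕ} (x : Fin m) :
    (Finset.univ.filter (· < x)).card = (x:ℕ) := by
  have : Finset.univ.filter (· < x) = Finset.Iio x := by ext v; simp
  rw [this, Fin.card_Iio]

lemma card_filter_gt_fin {m : ℕ} (x : Fin m) :
    (Finset.univ.filter (x < ·)).card = m - 1 - (x:ℕ) := by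
  have : Finset.univ.filter (x < ·) = Finset.Ioi x := by ext v; simp
  rw [this, Fin.card_Ioi]

lemma card_filter_perm {m : ℕ} (π : Equiv.Perm (Fin m)) (p : Fin m → Prop) [DecidablePred p] :
    (Finset.univ.filter (fun c => p (π c))).card = (Finset.univ.filter p).card := by
  apply Finset.card_bij (fun a _ => π a)
  · intro a ha; simp only [Finset.mem_filter, Finset.mem_univ, true_and] at ha ⊢; exact ha
  · intro a _ b _ h; exact π.injective h
  · intro b hb
    refine ⟨π.symm b, ?_, by simp⟩
    simp only [Finset.mem_filter, Finset.mem_univ, true_and] at hb ⊢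
    simpa using hb


lemma bpos_val {n k : ℕ} (hkn : k ≤ n) (ℓ a : Fin k) :
    (bpos hkn ℓ a : ℕ) = if (a : ℕ) < (ℓ : ℕ) then (a:ℕ) else n - k + (a:ℕ) := by
  unfold bpos; split <;> simp

lemma bpos_strictMono {n k : ℕ} (hkn : k ≤ n) (ℓ : Fin k) :
    StrictMono (bpos hkn ℓ) := by
  intro a b hab
  have ha := a.isLt; have hb := b.isLt
  rw [Fin.lt_def] at hab ⊢
  rw [bpos_val, bpos_val]
  split <;> split <;> omega

def AllM {k n : ℕ} (τ : Equiv.Perm (Fin k)) (ℓ : Fin k) (σ : Equiv.Perm (Fin n)) : Prop :=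
  ∀ i : Fin n, (ℓ:ℕ) ≤ (i:ℕ) → (i:ℕ) ≤ n - k + (ℓ:ℕ) → HasPMPMatch τ ℓ σ i

def ECond {k n : ℕ} (hkn : k ≤ n) (τ : Equiv.Perm (Fin k)) (ℓ : Fin k)
    (σ : Equiv.Perm (Fin n)) : Prop :=
  ∀ c : Fin k, c ≠ ℓ →
    (σ (bpos hkn ℓ c) : ℕ) =
      if (τ c : ℕ) < (τ ℓ : ℕ) then (τ c : ℕ) else n - k + (τ c : ℕ)

section Main
variable {k n : ℕ} (hkn : k ≤ n) (τ : Equiv.Perm (Fin k)) (ℓ : Fin k) (σ : Equiv.Perm (Fin n))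

lemma match_pos_inner {i : Fin n} (hm : HasPMPMatch τ ℓ σ i) :
    (ℓ:ℕ) ≤ (i:ℕ) ∧ (i:ℕ) ≤ n - k + (ℓ:ℕ) := by
  obtain ⟨f, hf, hfl, _⟩ := hm
  subst hfl
  exact ⟨strictMono_le_apply hf ℓ, strictMono_apply_le hf ℓ⟩

lemma card_filter_tau_lt (x : Fin k) :
    (Finset.univ.filter (fun c => τ c < x)).card = (x:ℕ) := by
  rw [card_filter_perm τ (· < x), card_filter_lt_fin]

lemma card_filter_tau_gt (x : Fin k) :
    (Finset.univ.filter (fun c => x < τ c)).card = k - 1 - (x:ℕ) := by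
  rw [card_filter_perm τ (x < ·), card_filter_gt_fin]

lemma match_val_inner {i : Fin n} (hm : HasPMPMatch τ ℓ σ i) :
    (τ ℓ:ℕ) ≤ (σ i:ℕ) ∧ (σ i:ℕ) ≤ n - k + (τ ℓ:ℕ) := by
  obtain ⟨f, hf, hfl, hiff⟩ := hm
  have hinj : Set.InjOn (fun c => σ (f c)) ↑(Finset.univ.filter (fun c => τ c < τ ℓ)) :=
    fun a _ b _ h => hf.injective (σ.injective h)
  have hinj' : Set.InjOn (fun c => σ (f c)) ↑(Finset.univ.filter (fun c => τ ℓ < τ c)) :=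
    fun a _ b _ h => hf.injective (σ.injective h)
  constructor
  · have hsub : (Finset.univ.filter (fun c => τ c < τ ℓ)).image (fun c => σ (f c)) ⊆
        Finset.univ.filter (· < σ i) := by
      intro v hv
      obtain ⟨c, hc, rfl⟩ := Finset.mem_image.1 hv
      simp only [Finset.mem_filter, Finset.mem_univ, true_and] at hc ⊢
      rw [← hfl]; exact (hiff c ℓ).2 hc
    have := Finset.card_le_card hsub
    rw [Finset.card_image_of_injOn hinj, card_filter_tau_lt, card_filter_lt_fin] at this
    exact this
  · have hsub : (Finset.univ.filter (fun c => τ ℓ < τ c)).image (fun c => σ (f c)) ⊆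
        Finset.univ.filter (σ i < ·) := by
      intro v hv
      obtain ⟨c, hc, rfl⟩ := Finset.mem_image.1 hv
      simp only [Finset.mem_filter, Finset.mem_univ, true_and] at hc ⊢
      rw [← hfl]; exact (hiff ℓ c).2 hc
    have := Finset.card_le_card hsub
    rw [Finset.card_image_of_injOn hinj', card_filter_tau_gt, card_filter_gt_fin] at this
    have h1 := (τ ℓ).isLt
    have h2 := (σ i).isLt
    omega

end Main

section Main2
variable {k n : ℕ} (τ : Equiv.Perm (Fin k)) (ℓ : Fin k) (σ : Equiv.Perm (Fin n))

lemma inner_iff (hkn : k ≤ n) (hall : AllM τ ℓ σ) (p : Fin n) :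
    ((ℓ:ℕ) ≤ (p:ℕ) ∧ (p:ℕ) ≤ n - k + (ℓ:ℕ)) ↔
    ((τ ℓ:ℕ) ≤ (σ p:ℕ) ∧ (σ p:ℕ) ≤ n - k + (τ ℓ:ℕ)) := by
  have hLk := ℓ.isLt
  have hTk := (τ ℓ).isLt
  set Pin := Finset.univ.filter (fun p : Fin n => (ℓ:ℕ) ≤ (p:ℕ) ∧ (p:ℕ) ≤ n - k + (ℓ:ℕ)) with hPin
  set Vin := Finset.univ.filter (fun v : Fin n => (τ ℓ:ℕ) ≤ (v:ℕ) ∧ (v:ℕ) ≤ n - k + (τ ℓ:ℕ)) with hVin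
  have hPcard : Pin.card = n - k + 1 := by
    have : Pin = Finset.Icc ⟨(ℓ:ℕ), by omega⟩ ⟨n - k + (ℓ:ℕ), by omega⟩ := by
      ext p; simp [hPin, Finset.mem_Icc, Fin.le_def]
    rw [this, Fin.card_Icc]; simp; omega
  have hVcard : Vin.card = n - k + 1 := by
    have : Vin = Finset.Icc ⟨(τ ℓ:ℕ), by omega⟩ ⟨n - k + (τ ℓ:ℕ), by omega⟩ := by
      ext p; simp [hVin, Finset.mem_Icc, Fin.le_def]
    rw [this, Fin.card_Icc]; simp; omega
  have hsub : Pin.image σ ⊆ Vin := by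
    intro v hv
    obtain ⟨p, hp, rfl⟩ := Finset.mem_image.1 hv
    simp only [hPin, Finset.mem_filter, Finset.mem_univ, true_and] at hp
    simp only [hVin, Finset.mem_filter, Finset.mem_univ, true_and]
    exact match_val_inner τ ℓ σ (hall p hp.1 hp.2)
  have heq : Pin.image σ = Vin := by
    apply Finset.eq_of_subset_of_card_le hsub
    rw [Finset.card_image_of_injective _ σ.injective, hPcard, hVcard]
  constructor
  · intro hp
    exact match_val_inner τ ℓ σ (hall p hp.1 hp.2)
  · intro hv
    have : σ p ∈ Vin := by
      simp only [hVin, Finset.mem_filter, Finset.mem_univ, true_and]; exact hv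
    rw [← heq] at this
    obtain ⟨q, hq, hqe⟩ := Finset.mem_image.1 this
    have : q = p := σ.injective hqe
    subst this
    simp only [hPin, Finset.mem_filter, Finset.mem_univ, true_and] at hq
    exact hq

end Main2

section Main3
variable {k n : ℕ} (τ : Equiv.Perm (Fin k)) (ℓ : Fin k) (σ : Equiv.Perm (Fin n))

lemma threshold (hkn : k ≤ n) (hall : AllM τ ℓ σ) (c : Fin k) (hc : c ≠ ℓ) :
    ((σ (bpos hkn ℓ c) : ℕ) < (τ ℓ:ℕ) ↔ (τ c:ℕ) < (τ ℓ:ℕ)) := by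
  have hLk := ℓ.isLt
  have hTk := (τ ℓ).isLt
  have hck := c.isLt
  by_cases hcl : (c:ℕ) < (ℓ:ℕ)
  · -- left block: use match at position ℓ
    set iL : Fin n := ⟨(ℓ:ℕ), by omega⟩ with hiL
    obtain ⟨f, hf, hfl, hiff⟩ := hall iL (le_refl _) (by simp [hiL] <;> omega)
    have hfℓ : (f ℓ : ℕ) = (ℓ:ℕ) := by rw [hfl]
    have hfc : (f c : ℕ) = (c:ℕ) := by
      have h1 := strictMono_le_apply hf c
      have h2 := strictMono_gap hf c ℓ (by omega)
      omega
    have hbp : bpos hkn ℓ c = f c := by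
      apply Fin.ext; rw [bpos_val, hfc, if_pos hcl]
    have hinner : (τ ℓ:ℕ) ≤ (σ iL:ℕ) ∧ (σ iL:ℕ) ≤ n - k + (τ ℓ:ℕ) :=
      (inner_iff τ ℓ σ hkn hall iL).1 (by simp [hiL] <;> omega)
    have houter : (σ (bpos hkn ℓ c):ℕ) < (τ ℓ:ℕ) ∨ n - k + (τ ℓ:ℕ) < (σ (bpos hkn ℓ c):ℕ) := by
      have := (inner_iff τ ℓ σ hkn hall (bpos hkn ℓ c)).2
      rw [bpos_val, if_pos hcl] at this
      by_contra hcon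
      push_neg at hcon
      have := this ⟨by omega, by omega⟩
      omega
    have hkey : σ (f c) < σ (f ℓ) ↔ τ c < τ ℓ := hiff c ℓ
    rw [hfl, Fin.lt_def, Fin.lt_def] at hkey
    rw [hbp]
    constructor
    · intro h; exact hkey.1 (by omega)
    · intro h
      have := hkey.2 h
      rw [← hbp] at this ⊢
      omega
  · -- right block: use match at position n-k+ℓ
    have hcl' : (ℓ:ℕ) < (c:ℕ) := by
      rcases lt_or_eq_of_le (not_lt.1 hcl) with h | h
      · exact h
      · exact absurd (Fin.ext h.symm) hc
    set iR : Fin n := ⟨n - k + (ℓ:ℕ), by omega⟩ with hiR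
    obtain ⟨f, hf, hfl, hiff⟩ := hall iR (by simp [hiR] <;> omega) (le_refl _)
    have hfℓ : (f ℓ : ℕ) = n - k + (ℓ:ℕ) := by rw [hfl]
    have hfc : (f c : ℕ) = n - k + (c:ℕ) := by
      have h1 := strictMono_apply_le hf c
      have h2 := strictMono_gap hf ℓ c (by omega)
      omega
    have hbp : bpos hkn ℓ c = f c := by
      apply Fin.ext; rw [bpos_val, hfc, if_neg hcl]
    have hinner : (τ ℓ:ℕ) ≤ (σ iR:ℕ) ∧ (σ iR:ℕ) ≤ n - k + (τ ℓ:ℕ) :=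
      (inner_iff τ ℓ σ hkn hall iR).1 (by simp [hiR] <;> omega)
    have houter : (σ (bpos hkn ℓ c):ℕ) < (τ ℓ:ℕ) ∨ n - k + (τ ℓ:ℕ) < (σ (bpos hkn ℓ c):ℕ) := by
      have := (inner_iff τ ℓ σ hkn hall (bpos hkn ℓ c)).2
      rw [bpos_val, if_neg hcl] at this
      by_contra hcon
      push_neg at hcon
      have := this ⟨by omega, by omega⟩
      omega
    have hkey : σ (f c) < σ (f ℓ) ↔ τ c < τ ℓ := hiff c ℓ
    rw [hfl, Fin.lt_def, Fin.lt_def] at hkey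
    rw [hbp]
    constructor
    · intro h; exact hkey.1 (by omega)
    · intro h
      have := hkey.2 h
      rw [← hbp] at this ⊢
      omega

end Main3

section Main4
variable {k n : ℕ} (τ : Equiv.Perm (Fin k)) (ℓ : Fin k) (σ : Equiv.Perm (Fin n))

lemma bpos_outer (hkn : k ≤ n) (c : Fin k) (hc : c ≠ ℓ) :
    ¬((ℓ:ℕ) ≤ (bpos hkn ℓ c : ℕ) ∧ (bpos hkn ℓ c : ℕ) ≤ n - k + (ℓ:ℕ)) := by
  have hck := c.isLt
  have hLk := ℓ.isLt
  have hne : (c:ℕ) ≠ (ℓ:ℕ) := fun h => hc (Fin.ext h)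
  rw [bpos_val]
  split <;> omega

lemma allm_econd (hkn : k ≤ n) (hall : AllM τ ℓ σ) : ECond hkn τ ℓ σ := by
  have hLk := ℓ.isLt
  have hTk := (τ ℓ).isLt
  have hTn : (τ ℓ:ℕ) < n := by omega
  -- small side
  have hsmall : ∀ c : Fin k, (τ c:ℕ) < (τ ℓ:ℕ) → (σ (bpos hkn ℓ c) : ℕ) = (τ c:ℕ) := by
    intro c₀ hc₀
    set i0 : Fin n := σ.symm ⟨(τ ℓ:ℕ), hTn⟩ with hi0
    have hσi0 : σ i0 = ⟨(τ ℓ:ℕ), hTn⟩ := σ.apply_symm_apply _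
    have hi0inner : (ℓ:ℕ) ≤ (i0:ℕ) ∧ (i0:ℕ) ≤ n - k + (ℓ:ℕ) := by
      apply (inner_iff τ ℓ σ hkn hall i0).2
      rw [hσi0]; exact ⟨le_refl _, Nat.le_add_left _ _⟩
    obtain ⟨f, hf, hfl, hiff⟩ := hall i0 hi0inner.1 hi0inner.2
    set C : Finset (Fin k) := Finset.univ.filter (fun c => τ c < τ ℓ) with hC
    have hCcard : C.card = (τ ℓ:ℕ) := card_filter_tau_lt τ (τ ℓ)
    have hmemC : ∀ c ∈ C, τ c < τ ℓ := by intro c hcm; simpa [hC] using hcm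
    have hc₀C : c₀ ∈ C := by
      rw [hC]
      simp only [Finset.mem_filter, Finset.mem_univ, true_and, Fin.lt_def]
      exact hc₀
    have hc₀ℓ : c₀ ≠ ℓ := fun h => by rw [h] at hc₀; omega
    set Vs : Finset (Fin n) := Finset.univ.filter (· < (⟨(τ ℓ:ℕ), hTn⟩ : Fin n)) with hVs
    have hVscard : Vs.card = (τ ℓ:ℕ) := card_filter_lt_fin _
    -- σ ∘ f image
    have hginj : Set.InjOn (fun c => σ (f c)) ↑C := fun a _ b _ h => hf.injective (σ.injective h)
    have himg1 : C.image (fun c => σ (f c)) = Vs := by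
      apply Finset.eq_of_subset_of_card_le
      · intro v hv
        obtain ⟨c, hcm, rfl⟩ := Finset.mem_image.1 hv
        simp only [hVs, Finset.mem_filter, Finset.mem_univ, true_and]
        rw [← hσi0, ← hfl]
        exact (hiff c ℓ).2 (hmemC c hcm)
      · rw [Finset.card_image_of_injOn hginj, hCcard, hVscard]
    -- value embedding image
    have hhinj : Set.InjOn (fun c => (⟨(τ c:ℕ), lt_of_lt_of_le (τ c).isLt hkn⟩ : Fin n)) ↑C := by
      intro a _ b _ h
      simp only [Fin.mk.injEq] at h
      exact τ.injective (Fin.ext h)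
    have himg2 : C.image (fun c => (⟨(τ c:ℕ), lt_of_lt_of_le (τ c).isLt hkn⟩ : Fin n)) = Vs := by
      apply Finset.eq_of_subset_of_card_le
      · intro v hv
        obtain ⟨c, hcm, rfl⟩ := Finset.mem_image.1 hv
        simp only [hVs, Finset.mem_filter, Finset.mem_univ, true_and, Fin.mk_lt_mk]
        exact Fin.lt_def.1 (hmemC c hcm)
      · rw [Finset.card_image_of_injOn hhinj, hCcard, hVscard]
    have hval : ∀ c ∈ C, σ (f c) = (⟨(τ c:ℕ), lt_of_lt_of_le (τ c).isLt hkn⟩ : Fin n) := by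
      apply mono_image_unique hginj hhinj (himg1.trans himg2.symm)
      intro a _ b _
      rw [hiff a b]
      simp only [Fin.mk_lt_mk]
      exact Fin.lt_def
    -- positions
    set Ps : Finset (Fin n) := Finset.univ.filter (fun p => σ p < (⟨(τ ℓ:ℕ), hTn⟩ : Fin n)) with hPs
    have hPscard : Ps.card = (τ ℓ:ℕ) := by
      have : Ps = Vs.image σ.symm := by
        ext p
        simp only [hPs, hVs, Finset.mem_filter, Finset.mem_univ, true_and, Finset.mem_image]
        constructor
        · intro h; exact ⟨σ p, h, σ.symm_apply_apply p⟩
        · rintro ⟨v, hv, rfl⟩; rwa [σ.apply_symm_apply]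
      rw [this, Finset.card_image_of_injective _ σ.symm.injective, hVscard]
    have hfinj : Set.InjOn f ↑C := fun a _ b _ h => hf.injective h
    have hbinj : Set.InjOn (bpos hkn ℓ) ↑C := fun a _ b _ h => (bpos_strictMono hkn ℓ).injective h
    have himg3 : C.image f = Ps := by
      apply Finset.eq_of_subset_of_card_le
      · intro p hp
        obtain ⟨c, hcm, rfl⟩ := Finset.mem_image.1 hp
        simp only [hPs, Finset.mem_filter, Finset.mem_univ, true_and]
        rw [hval c hcm, Fin.mk_lt_mk]
        exact hmemC c hcm
      · rw [Finset.card_image_of_injOn hfinj, hCcard, hPscard]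
    have himg4 : C.image (bpos hkn ℓ) = Ps := by
      apply Finset.eq_of_subset_of_card_le
      · intro p hp
        obtain ⟨c, hcm, rfl⟩ := Finset.mem_image.1 hp
        simp only [hPs, Finset.mem_filter, Finset.mem_univ, true_and]
        have hcℓ : c ≠ ℓ := fun h => by
          have := hmemC c hcm; rw [h] at this; exact lt_irrefl _ this
        rw [Fin.lt_def]
        exact (threshold τ ℓ σ hkn hall c hcℓ).2 (hmemC c hcm)
      · rw [Finset.card_image_of_injOn hbinj, hCcard, hPscard]
    have hpos : ∀ c ∈ C, f c = bpos hkn ℓ c := by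
      apply mono_image_unique hfinj hbinj (himg3.trans himg4.symm)
      intro a _ b _
      rw [hf.lt_iff_lt, (bpos_strictMono hkn ℓ).lt_iff_lt]
    rw [← hpos c₀ hc₀C, hval c₀ hc₀C]
  -- big side
  have hbig : ∀ c : Fin k, (τ ℓ:ℕ) < (τ c:ℕ) → (σ (bpos hkn ℓ c) : ℕ) = n - k + (τ c:ℕ) := by
    intro c₀ hc₀
    have hTn' : n - k + (τ ℓ:ℕ) < n := by omega
    set i1 : Fin n := σ.symm ⟨n - k + (τ ℓ:ℕ), hTn'⟩ with hi1
    have hσi1 : σ i1 = ⟨n - k + (τ ℓ:ℕ), hTn'⟩ := σ.apply_symm_apply _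
    have hi1inner : (ℓ:ℕ) ≤ (i1:ℕ) ∧ (i1:ℕ) ≤ n - k + (ℓ:ℕ) := by
      apply (inner_iff τ ℓ σ hkn hall i1).2
      rw [hσi1]; exact ⟨Nat.le_add_left _ _, le_refl _⟩
    obtain ⟨f, hf, hfl, hiff⟩ := hall i1 hi1inner.1 hi1inner.2
    set B : Finset (Fin k) := Finset.univ.filter (fun c => τ ℓ < τ c) with hB
    have hBcard : B.card = k - 1 - (τ ℓ:ℕ) := card_filter_tau_gt τ (τ ℓ)
    have hmemB : ∀ c ∈ B, τ ℓ < τ c := by intro c hcm; simpa [hB] using hcm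
    have hc₀B : c₀ ∈ B := by
      rw [hB]
      simp only [Finset.mem_filter, Finset.mem_univ, true_and, Fin.lt_def]
      exact hc₀
    have hc₀ℓ : c₀ ≠ ℓ := fun h => by rw [h] at hc₀; omega
    set Vb : Finset (Fin n) := Finset.univ.filter ((⟨n - k + (τ ℓ:ℕ), hTn'⟩ : Fin n) < ·) with hVb
    have hVbcard : Vb.card = k - 1 - (τ ℓ:ℕ) := by
      rw [hVb, card_filter_gt_fin]
      show n - 1 - (n - k + (τ ℓ:ℕ)) = _
      omega
    have hginj : Set.InjOn (fun c => σ (f c)) ↑B := fun a _ b _ h => hf.injective (σ.injective h)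
    have himg1 : B.image (fun c => σ (f c)) = Vb := by
      apply Finset.eq_of_subset_of_card_le
      · intro v hv
        obtain ⟨c, hcm, rfl⟩ := Finset.mem_image.1 hv
        simp only [hVb, Finset.mem_filter, Finset.mem_univ, true_and]
        rw [← hσi1, ← hfl]
        exact (hiff ℓ c).2 (hmemB c hcm)
      · rw [Finset.card_image_of_injOn hginj, hBcard, hVbcard]
    have hembn : ∀ c : Fin k, n - k + (τ c:ℕ) < n := fun c => by have := (τ c).isLt; omega
    have hhinj : Set.InjOn (fun c => (⟨n - k + (τ c:ℕ), hembn c⟩ : Fin n)) ↑B := by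
      intro a _ b _ h
      simp only [Fin.mk.injEq] at h
      exact τ.injective (Fin.ext (by omega))
    have himg2 : B.image (fun c => (⟨n - k + (τ c:ℕ), hembn c⟩ : Fin n)) = Vb := by
      apply Finset.eq_of_subset_of_card_le
      · intro v hv
        obtain ⟨c, hcm, rfl⟩ := Finset.mem_image.1 hv
        simp only [hVb, Finset.mem_filter, Finset.mem_univ, true_and, Fin.mk_lt_mk]
        have := hmemB c hcm
        rw [Fin.lt_def] at this
        omega
      · rw [Finset.card_image_of_injOn hhinj, hBcard, hVbcard]
    have hval : ∀ c ∈ B, σ (f c) = (⟨n - k + (τ c:ℕ), hembn c⟩ : Fin n) := by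
      apply mono_image_unique hginj hhinj (himg1.trans himg2.symm)
      intro a _ b _
      rw [hiff a b]
      simp only [Fin.mk_lt_mk, Fin.lt_def]
      omega
    set Pb : Finset (Fin n) := Finset.univ.filter (fun p => (⟨n - k + (τ ℓ:ℕ), hTn'⟩ : Fin n) < σ p) with hPb
    have hPbcard : Pb.card = k - 1 - (τ ℓ:ℕ) := by
      have : Pb = Vb.image σ.symm := by
        ext p
        simp only [hPb, hVb, Finset.mem_filter, Finset.mem_univ, true_and, Finset.mem_image]
        constructor
        · intro h; exact ⟨σ p, h, σ.symm_apply_apply p⟩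
        · rintro ⟨v, hv, rfl⟩; rwa [σ.apply_symm_apply]
      rw [this, Finset.card_image_of_injective _ σ.symm.injective, hVbcard]
    have hfinj : Set.InjOn f ↑B := fun a _ b _ h => hf.injective h
    have hbinj : Set.InjOn (bpos hkn ℓ) ↑B := fun a _ b _ h => (bpos_strictMono hkn ℓ).injective h
    have himg3 : B.image f = Pb := by
      apply Finset.eq_of_subset_of_card_le
      · intro p hp
        obtain ⟨c, hcm, rfl⟩ := Finset.mem_image.1 hp
        simp only [hPb, Finset.mem_filter, Finset.mem_univ, true_and]
        rw [hval c hcm, Fin.mk_lt_mk]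
        have := hmemB c hcm
        rw [Fin.lt_def] at this
        omega
      · rw [Finset.card_image_of_injOn hfinj, hBcard, hPbcard]
    have himg4 : B.image (bpos hkn ℓ) = Pb := by
      apply Finset.eq_of_subset_of_card_le
      · intro p hp
        obtain ⟨c, hcm, rfl⟩ := Finset.mem_image.1 hp
        simp only [hPb, Finset.mem_filter, Finset.mem_univ, true_and]
        have hcmB := hmemB c hcm
        rw [Fin.lt_def] at hcmB
        have hcℓ : c ≠ ℓ := fun h => by rw [h] at hcmB; omega
        have hnotlt : ¬ ((σ (bpos hkn ℓ c) : ℕ) < (τ ℓ:ℕ)) := by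
          rw [threshold τ ℓ σ hkn hall c hcℓ]; omega
        have houter := bpos_outer ℓ hkn c hcℓ
        have hni := (inner_iff τ ℓ σ hkn hall (bpos hkn ℓ c))
        rw [Fin.lt_def]
        by_contra hcon
        exact houter (hni.2 ⟨by omega, by simp at hcon; omega⟩)
      · rw [Finset.card_image_of_injOn hbinj, hBcard, hPbcard]
    have hpos : ∀ c ∈ B, f c = bpos hkn ℓ c := by
      apply mono_image_unique hfinj hbinj (himg3.trans himg4.symm)
      intro a _ b _
      rw [hf.lt_iff_lt, (bpos_strictMono hkn ℓ).lt_iff_lt]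
    rw [← hpos c₀ hc₀B, hval c₀ hc₀B]
  -- combine
  intro c hc
  have hne : (τ c:ℕ) ≠ (τ ℓ:ℕ) := fun h => hc (τ.injective (Fin.ext h))
  by_cases h : (τ c:ℕ) < (τ ℓ:ℕ)
  · rw [if_pos h]; exact hsmall c h
  · rw [if_neg h]; exact hbig c (by omega)

end Main4

section Main5
variable {k n : ℕ} (τ : Equiv.Perm (Fin k)) (ℓ : Fin k) (σ : Equiv.Perm (Fin n))

lemma tau_ne (c : Fin k) (hc : c ≠ ℓ) : (τ c:ℕ) ≠ (τ ℓ:ℕ) :=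
  fun h => hc (τ.injective (Fin.ext h))

lemma outer_pos_eq_bpos (hkn : k ≤ n) (p : Fin n)
    (hp : (p:ℕ) < (ℓ:ℕ) ∨ n - k + (ℓ:ℕ) < (p:ℕ)) :
    ∃ c : Fin k, c ≠ ℓ ∧ bpos hkn ℓ c = p := by
  have hLk := ℓ.isLt
  have hpn := p.isLt
  rcases hp with hp | hp
  · refine ⟨⟨(p:ℕ), by omega⟩, fun h => ?_, ?_⟩
    · have : (p:ℕ) = (ℓ:ℕ) := congrArg Fin.val h
      omega
    · apply Fin.ext; rw [bpos_val]; simp only [if_pos hp]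
  · refine ⟨⟨(p:ℕ) - (n - k), by omega⟩, fun h => ?_, ?_⟩
    · have : (p:ℕ) - (n - k) = (ℓ:ℕ) := congrArg Fin.val h
      omega
    · apply Fin.ext; rw [bpos_val]
      have : ¬ ((p:ℕ) - (n - k) < (ℓ:ℕ)) := by omega
      simp only [if_neg this]
      omega

lemma econd_rhs1 (hkn : k ≤ n) (he : ECond hkn τ ℓ σ) (p : Fin n) :
    ((p : ℕ) < (ℓ : ℕ) ∨ n - k + (ℓ : ℕ) < (p : ℕ)) ↔
    ((σ p : ℕ) < (τ ℓ : ℕ) ∨ n - k + (τ ℓ : ℕ) < (σ p : ℕ)) := by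
  have hLk := ℓ.isLt
  have hTk := (τ ℓ).isLt
  have hpn := p.isLt
  constructor
  · intro hp
    obtain ⟨c, hc, hbc⟩ := outer_pos_eq_bpos ℓ hkn p hp
    have hv := he c hc
    rw [hbc] at hv
    have hne := tau_ne τ ℓ c hc
    have hck := (τ c).isLt
    by_cases hx : (τ c:ℕ) < (τ ℓ:ℕ)
    · rw [if_pos hx] at hv; omega
    · rw [if_neg hx] at hv; omega
  · intro hv
    rcases hv with hv | hv
    · set c : Fin k := τ.symm ⟨(σ p:ℕ), by omega⟩ with hc
      have hτc : (τ c:ℕ) = (σ p:ℕ) := by rw [hc, τ.apply_symm_apply]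
      have hcl : c ≠ ℓ := fun h => by rw [h] at hτc; omega
      have hvc := he c hcl
      rw [if_pos (by omega)] at hvc
      have : σ (bpos hkn ℓ c) = σ p := Fin.ext (by omega)
      have hbp : bpos hkn ℓ c = p := σ.injective this
      have := bpos_val hkn ℓ c
      rw [hbp] at this
      have hck := c.isLt
      have hne : (c:ℕ) ≠ (ℓ:ℕ) := fun h => hcl (Fin.ext h)
      split at this <;> omega
    · set c : Fin k := τ.symm ⟨(σ p:ℕ) - (n - k), by omega⟩ with hc
      have hτc : (τ c:ℕ) = (σ p:ℕ) - (n - k) := by rw [hc, τ.apply_symm_apply]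
      have hcl : c ≠ ℓ := fun h => by rw [h] at hτc; omega
      have hvc := he c hcl
      rw [if_neg (by omega)] at hvc
      have : σ (bpos hkn ℓ c) = σ p := Fin.ext (by omega)
      have hbp : bpos hkn ℓ c = p := σ.injective this
      have := bpos_val hkn ℓ c
      rw [hbp] at this
      have hck := c.isLt
      have hne : (c:ℕ) ≠ (ℓ:ℕ) := fun h => hcl (Fin.ext h)
      split at this <;> omega

lemma econd_rhs2 (hkn : k ≤ n) (he : ECond hkn τ ℓ σ) (a b : Fin k)
    (ha : a ≠ ℓ) (hb : b ≠ ℓ) :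
    (σ (bpos hkn ℓ a) < σ (bpos hkn ℓ b) ↔ τ a < τ b) := by
  have hva := he a ha
  have hvb := he b hb
  have hnea := tau_ne τ ℓ a ha
  have hneb := tau_ne τ ℓ b hb
  have h1 := (τ a).isLt
  have h2 := (τ b).isLt
  have h3 := (τ ℓ).isLt
  rw [Fin.lt_def, Fin.lt_def, hva, hvb]
  split <;> split <;> constructor <;> intro <;> omega

end Main5

section Main6
variable {k n : ℕ} (τ : Equiv.Perm (Fin k)) (ℓ : Fin k) (σ : Equiv.Perm (Fin n))

lemma econd_allm (hkn : k ≤ n) (he : ECond hkn τ ℓ σ) : AllM τ ℓ σ := by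
  intro i hi1 hi2
  have hLk := ℓ.isLt
  have hTk := (τ ℓ).isLt
  have hin := i.isLt
  have hσinner : (τ ℓ:ℕ) ≤ (σ i:ℕ) ∧ (σ i:ℕ) ≤ n - k + (τ ℓ:ℕ) := by
    have := (econd_rhs1 τ ℓ σ hkn he i).2
    have hσn := (σ i).isLt
    by_contra hcon
    push_neg at hcon
    have := this (by omega)
    omega
  have hfval : ∀ a : Fin k, (fun a => if a = ℓ then i else bpos hkn ℓ a) a
      = if a = ℓ then i else bpos hkn ℓ a := fun a => rfl
  refine ⟨fun a => if a = ℓ then i else bpos hkn ℓ a, ?_, by rw [hfval ℓ, if_pos rfl], ?_⟩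
  · intro a b hab
    have hav := a.isLt; have hbv := b.isLt
    rw [Fin.lt_def] at hab
    rw [hfval, hfval]
    by_cases ha : a = ℓ <;> by_cases hb : b = ℓ
    · exfalso; rw [ha, hb] at hab; omega
    · have hav' : (a:ℕ) = (ℓ:ℕ) := by rw [ha]
      rw [if_pos ha, if_neg hb, Fin.lt_def, bpos_val]
      have hnb : ¬ ((b:ℕ) < (ℓ:ℕ)) := by omega
      rw [if_neg hnb]; omega
    · have hbv' : (b:ℕ) = (ℓ:ℕ) := by rw [hb]
      rw [if_neg ha, if_pos hb, Fin.lt_def, bpos_val]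
      rw [if_pos (by omega)]; omega
    · rw [if_neg ha, if_neg hb]
      exact bpos_strictMono hkn ℓ (by rw [Fin.lt_def]; exact hab)
  · intro a b
    rw [hfval, hfval]
    by_cases ha : a = ℓ <;> by_cases hb : b = ℓ
    · rw [if_pos ha, if_pos hb, ha, hb]
      simp
    · have haτ : (τ a:ℕ) = (τ ℓ:ℕ) := by rw [ha]
      rw [if_pos ha, if_neg hb, Fin.lt_def, Fin.lt_def, he b hb, haτ]
      have hne := tau_ne τ ℓ b hb
      have h2 := (τ b).isLt
      split <;> constructor <;> intro <;> omega
    · have hbτ : (τ b:ℕ) = (τ ℓ:ℕ) := by rw [hb]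
      rw [if_neg ha, if_pos hb, Fin.lt_def, Fin.lt_def, he a ha, hbτ]
      have hne := tau_ne τ ℓ a ha
      have h2 := (τ a).isLt
      split <;> constructor <;> intro <;> omega
    · rw [if_neg ha, if_neg hb]
      exact econd_rhs2 τ ℓ σ hkn he a b ha hb

lemma rhs_econd (hkn : k ≤ n)
    (h1 : ∀ p : Fin n,
        ((p : ℕ) < (ℓ : ℕ) ∨ n - k + (ℓ : ℕ) < (p : ℕ)) ↔
        ((σ p : ℕ) < (τ ℓ : ℕ) ∨ n - k + (τ ℓ : ℕ) < (σ p : ℕ)))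
    (h2 : ∀ a b : Fin k, a ≠ ℓ → b ≠ ℓ →
        (σ (bpos hkn ℓ a) < σ (bpos hkn ℓ b) ↔ τ a < τ b)) :
    ECond hkn τ ℓ σ := by
  have hLk := ℓ.isLt
  have hTk := (τ ℓ).isLt
  have hTn : (τ ℓ:ℕ) < n := by omega
  have hTn' : n - k + (τ ℓ:ℕ) < n := by omega
  set s : Finset (Fin k) := Finset.univ.filter (fun c => c ≠ ℓ) with hs
  have hmem : ∀ c : Fin k, c ∈ s ↔ c ≠ ℓ := by intro c; simp [hs]
  have hscard : s.card = k - 1 := by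
    rw [hs, Finset.filter_ne', Finset.card_erase_of_mem (Finset.mem_univ _)]
    simp
  set O : Finset (Fin n) :=
    Finset.univ.filter (fun v => (v:ℕ) < (τ ℓ:ℕ) ∨ n - k + (τ ℓ:ℕ) < (v:ℕ)) with hO
  have hOcard : O.card = k - 1 := by
    have hf1 : (Finset.univ.filter (fun v : Fin n => (v:ℕ) < (τ ℓ:ℕ))).card = (τ ℓ:ℕ) := by
      have : Finset.univ.filter (fun v : Fin n => (v:ℕ) < (τ ℓ:ℕ)) =
          Finset.univ.filter (· < (⟨(τ ℓ:ℕ), hTn⟩ : Fin n)) := by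
        apply Finset.filter_congr; intro v _; simp [Fin.lt_def]
      rw [this, card_filter_lt_fin]
    have hf2 : (Finset.univ.filter (fun v : Fin n => n - k + (τ ℓ:ℕ) < (v:ℕ))).card =
        n - 1 - (n - k + (τ ℓ:ℕ)) := by
      have : Finset.univ.filter (fun v : Fin n => n - k + (τ ℓ:ℕ) < (v:ℕ)) =
          Finset.univ.filter ((⟨n - k + (τ ℓ:ℕ), hTn'⟩ : Fin n) < ·) := by
        apply Finset.filter_congr; intro v _; simp [Fin.lt_def]
      rw [this, card_filter_gt_fin]
    have hdisj : Disjoint (Finset.univ.filter (fun v : Fin n => (v:ℕ) < (τ ℓ:ℕ)))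
        (Finset.univ.filter (fun v : Fin n => n - k + (τ ℓ:ℕ) < (v:ℕ))) := by
      rw [Finset.disjoint_left]
      intro v hv1 hv2
      simp only [Finset.mem_filter, Finset.mem_univ, true_and] at hv1 hv2
      omega
    rw [hO, Finset.filter_or, Finset.card_union_of_disjoint hdisj, hf1, hf2]
    omega
  have hbouter : ∀ c : Fin k, c ≠ ℓ →
      ((bpos hkn ℓ c : ℕ) < (ℓ:ℕ) ∨ n - k + (ℓ:ℕ) < (bpos hkn ℓ c : ℕ)) := by
    intro c hc
    have := bpos_outer ℓ hkn c hc
    have h3 := (bpos hkn ℓ c).isLt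
    omega
  -- the two functions
  set g : Fin k → Fin n := fun c => σ (bpos hkn ℓ c) with hg
  have hιn : ∀ c : Fin k, (if (τ c:ℕ) < (τ ℓ:ℕ) then (τ c:ℕ) else n - k + (τ c:ℕ)) < n := by
    intro c; have := (τ c).isLt; split <;> omega
  set h : Fin k → Fin n := fun c => ⟨_, hιn c⟩ with hh
  have hhval : ∀ c : Fin k, (h c : ℕ) =
      if (τ c:ℕ) < (τ ℓ:ℕ) then (τ c:ℕ) else n - k + (τ c:ℕ) := fun c => rfl
  have hginj : Set.InjOn g ↑s :=
    fun a _ b _ hab => (bpos_strictMono hkn ℓ).injective (σ.injective hab)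
  have hhinj : Set.InjOn h ↑s := by
    intro a ha b hb hab
    rw [Finset.mem_coe, hmem] at ha hb
    have hval := congrArg Fin.val hab
    rw [hhval, hhval] at hval
    have hna := tau_ne τ ℓ a ha
    have hnb := tau_ne τ ℓ b hb
    have h3 := (τ a).isLt
    have h4 := (τ b).isLt
    have : (τ a:ℕ) = (τ b:ℕ) := by split at hval <;> split at hval <;> omega
    exact τ.injective (Fin.ext this)
  have himgG : s.image g = O := by
    apply Finset.eq_of_subset_of_card_le
    · intro v hv
      obtain ⟨c, hcm, rfl⟩ := Finset.mem_image.1 hv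
      rw [hmem] at hcm
      simp only [hO, Finset.mem_filter, Finset.mem_univ, true_and]
      exact (h1 (bpos hkn ℓ c)).1 (hbouter c hcm)
    · rw [Finset.card_image_of_injOn hginj, hscard, hOcard]
  have himgH : s.image h = O := by
    apply Finset.eq_of_subset_of_card_le
    · intro v hv
      obtain ⟨c, hcm, rfl⟩ := Finset.mem_image.1 hv
      rw [hmem] at hcm
      simp only [hO, Finset.mem_filter, Finset.mem_univ, true_and, hhval]
      have hna := tau_ne τ ℓ c hcm
      have h3 := (τ c).isLt
      split <;> omega
    · rw [Finset.card_image_of_injOn hhinj, hscard, hOcard]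
  have hord : ∀ a ∈ s, ∀ b ∈ s, (g a < g b ↔ h a < h b) := by
    intro a ha b hb
    rw [hmem] at ha hb
    have hna := tau_ne τ ℓ a ha
    have hnb := tau_ne τ ℓ b hb
    have h3 := (τ a).isLt
    have h4 := (τ b).isLt
    have key : ((h a:ℕ) < (h b:ℕ)) ↔ (τ a:ℕ) < (τ b:ℕ) := by
      rw [hhval, hhval]
      by_cases hxa : (τ a:ℕ) < (τ ℓ:ℕ) <;> by_cases hxb : (τ b:ℕ) < (τ ℓ:ℕ)
      · rw [if_pos hxa, if_pos hxb]
      · rw [if_pos hxa, if_neg hxb]; constructor <;> intro <;> omega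
      · rw [if_neg hxa, if_pos hxb]; constructor <;> intro <;> omega
      · rw [if_neg hxa, if_neg hxb]; constructor <;> intro <;> omega
    show σ (bpos hkn ℓ a) < σ (bpos hkn ℓ b) ↔ h a < h b
    rw [h2 a b ha hb, Fin.lt_def, Fin.lt_def]
    exact key.symm
  have hfin := mono_image_unique hginj hhinj (himgG.trans himgH.symm) hord
  intro c hc
  have hgc := hfin c (by rw [hmem]; exact hc)
  have hval := congrArg Fin.val hgc
  rw [hhval] at hval
  exact hval

end Main6

section Main7
variable {k n : ℕ} (τ : Equiv.Perm (Fin k)) (ℓ : Fin k) (σ : Equiv.Perm (Fin n))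

lemma count_iff_allm (hkn : k ≤ n) :
    Nat.card {i : Fin n // HasPMPMatch τ ℓ σ i} = n - k + 1 ↔ AllM τ ℓ σ := by
  classical
  have hLk := ℓ.isLt
  have hcard : Nat.card {i : Fin n // HasPMPMatch τ ℓ σ i} =
      (Finset.univ.filter (HasPMPMatch τ ℓ σ)).card := by
    rw [Nat.card_eq_fintype_card, Fintype.card_subtype]
  set Pin := Finset.univ.filter
      (fun p : Fin n => (ℓ:ℕ) ≤ (p:ℕ) ∧ (p:ℕ) ≤ n - k + (ℓ:ℕ)) with hPin
  have hPcard : Pin.card = n - k + 1 := by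
    have : Pin = Finset.Icc ⟨(ℓ:ℕ), by omega⟩ ⟨n - k + (ℓ:ℕ), by omega⟩ := by
      ext p; simp [hPin, Finset.mem_Icc, Fin.le_def]
    rw [this, Fin.card_Icc]; simp; omega
  have hsub : Finset.univ.filter (HasPMPMatch τ ℓ σ) ⊆ Pin := by
    intro i hi
    simp only [Finset.mem_filter, Finset.mem_univ, true_and] at hi
    simp only [hPin, Finset.mem_filter, Finset.mem_univ, true_and]
    exact match_pos_inner τ ℓ σ hi
  constructor
  · intro h i hi1 hi2
    have heq : Finset.univ.filter (HasPMPMatch τ ℓ σ) = Pin := by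
      apply Finset.eq_of_subset_of_card_le hsub
      rw [hPcard, ← hcard, h]
    have : i ∈ Pin := by
      simp only [hPin, Finset.mem_filter, Finset.mem_univ, true_and]
      exact ⟨hi1, hi2⟩
    rw [← heq] at this
    exact (Finset.mem_filter.1 this).2
  · intro hall
    rw [hcard]
    have heq : Finset.univ.filter (HasPMPMatch τ ℓ σ) = Pin := by
      apply Finset.Subset.antisymm hsub
      intro i hi
      simp only [hPin, Finset.mem_filter, Finset.mem_univ, true_and] at hi
      simp only [Finset.mem_filter, Finset.mem_univ, true_and]
      exact hall i hi.1 hi.2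
    rw [heq, hPcard]

theorem stmt4' (hkn : k ≤ n) :
    Nat.card {i : Fin n // HasPMPMatch τ ℓ σ i} = n - k + 1 ↔
      ((∀ p : Fin n,
          ((p : ℕ) < (ℓ : ℕ) ∨ n - k + (ℓ : ℕ) < (p : ℕ)) ↔
          ((σ p : ℕ) < (τ ℓ : ℕ) ∨ n - k + (τ ℓ : ℕ) < (σ p : ℕ))) ∧
       (∀ a b : Fin k, a ≠ ℓ → b ≠ ℓ →
          (σ (bpos hkn ℓ a) < σ (bpos hkn ℓ b) ↔ τ a < τ b))) := by
  rw [count_iff_allm τ ℓ σ hkn]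
  constructor
  · intro hall
    have he := allm_econd τ ℓ σ hkn hall
    exact ⟨econd_rhs1 τ ℓ σ hkn he, econd_rhs2 τ ℓ σ hkn he⟩
  · rintro ⟨h1, h2⟩
    exact econd_allm τ ℓ σ hkn (rhs_econd τ ℓ σ hkn h1 h2)

end Main7

theorem stmt4 (n k : ℕ) (hkn : k ≤ n) (τ : Equiv.Perm (Fin k)) (ℓ : Fin k)
    (σ : Equiv.Perm (Fin n)) :
    pmpCount τ ℓ σ = n - k + 1 ↔
      ((∀ p : Fin n,
          ((p : ℕ) < (ℓ : ℕ) ∨ n - k + (ℓ : ℕ) < (p : ℕ)) ↔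
          ((σ p : ℕ) < (τ ℓ : ℕ) ∨ n - k + (τ ℓ : ℕ) < (σ p : ℕ))) ∧
       (∀ a b : Fin k, a ≠ ℓ → b ≠ ℓ →
          (σ (bpos hkn ℓ a) < σ (bpos hkn ℓ b) ↔ τ a < τ b))) :=
  stmt4' τ ℓ σ hkn
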